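/- The function ϕ(ξ) = [φ₃(φ₂−φ₁) + φ₁(φ₃−φ₂) sn²(ξ/(2g), κ)] / [(φ₂−φ₁) + (φ₃−φ₂) sn²(ξ/(2g), κ)], with g = 2/√(φ₃(φ₂−φ₁)) and κ² = −φ₁(φ₃−φ₂)/(φ₃(φ₂−φ₁)), satisfies the differential equation (ϕ')² = (1/4)ϕ(ϕ₃ − ϕ)(ϕ − φ₂)(ϕ − φ₁). -/

import Mathlib

lemma wave_ode_aux (a b c nn dd X Y : ℝ) (hdd : dd ≠ 0) (hY : Y ≠ 0)
    (h : X ^ 2 * 4 * dd ^ 4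
      = Y ^ 2 * (nn * ((c * dd - nn) * ((nn - b * dd) * (nn - a * dd))))) :
    (X / Y) ^ 2 = (1 / 4) * (nn / dd) * (c - nn / dd) * (nn / dd - b) * (nn / dd - a) := by
  field_simp
  linear_combination h

set_option maxRecDepth 8000 in
set_option maxHeartbeats 1000000 in
/-- The explicit formula satisfies the quadrature equation
`(ϕ')² = (1/4) ϕ (φ₃ - ϕ)(ϕ - φ₂)(ϕ - φ₁)`. -/
theorem wave_ode (φ₁ φ₂ φ₃ g κ : ℝ) (sn : ℝ → ℝ) (ϕ : ℝ → ℝ)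
    (h1 : φ₁ < 0) (h2 : 0 < φ₂) (h23 : φ₂ < φ₃)
    (hg : g = 2 / Real.sqrt (φ₃ * (φ₂ - φ₁)))
    (hκ : κ ^ 2 = -φ₁ * (φ₃ - φ₂) / (φ₃ * (φ₂ - φ₁)))
    (hsn_diff : Differentiable ℝ sn)
    (hsn' : ∀ u, (deriv sn u) ^ 2 = (1 - sn u ^ 2) * (1 - κ ^ 2 * sn u ^ 2))
    (hϕ : ∀ ξ, ϕ ξ = (φ₃ * (φ₂ - φ₁) + φ₁ * (φ₃ - φ₂) * sn (ξ / (2 * g)) ^ 2)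
      / ((φ₂ - φ₁) + (φ₃ - φ₂) * sn (ξ / (2 * g)) ^ 2)) :
    ∀ ξ, (deriv ϕ ξ) ^ 2
      = (1 / 4) * ϕ ξ * (φ₃ - ϕ ξ) * (ϕ ξ - φ₂) * (ϕ ξ - φ₁) := by
  have hC : (0:ℝ) < φ₂ - φ₁ := by linarith
  have hE : (0:ℝ) < φ₃ - φ₂ := by linarith
  have hA : (0:ℝ) < φ₃ * (φ₂ - φ₁) := mul_pos (by linarith) hC
  have hgpos : 0 < g := by
    rw [hg]; exact div_pos two_pos (Real.sqrt_pos.mpr hA)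
  have hgne : g ≠ 0 := hgpos.ne'
  have hg2 : g ^ 2 * (φ₃ * (φ₂ - φ₁)) = 4 := by
    rw [hg, div_pow, Real.sq_sqrt hA.le]
    field_simp
    norm_num
    rw [mul_div_assoc, div_self (by linarith : (0:ℝ) < φ₃).ne', mul_one]
  have hκ' : κ ^ 2 * (φ₃ * (φ₂ - φ₁)) = -φ₁ * (φ₃ - φ₂) := by
    rw [hκ]; field_simp
    rw [mul_div_assoc, div_self (by linarith : (0:ℝ) < φ₃).ne', mul_one]
  intro ξ
  set u := ξ / (2 * g) with hu
  set s0 := sn u with hs0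
  set d := deriv sn u with hd
  have hD : (φ₂ - φ₁) + (φ₃ - φ₂) * s0 ^ 2 ≠ 0 := by positivity
  have hlin : HasDerivAt (fun x : ℝ => x / (2 * g)) (1 / (2 * g)) ξ := by
    simpa using (hasDerivAt_id ξ).div_const (2 * g)
  have hs : HasDerivAt (fun x => sn (x / (2 * g))) (d * (1 / (2 * g))) ξ :=
    ((hsn_diff u).hasDerivAt).comp ξ hlin
  have hnum := (hasDerivAt_const ξ (φ₃ * (φ₂ - φ₁))).add
    ((hs.pow 2).const_mul (φ₁ * (φ₃ - φ₂)))
  have hden := (hasDerivAt_const ξ ((φ₂ - φ₁))).add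
    ((hs.pow 2).const_mul ((φ₃ - φ₂)))
  have hϕf : ϕ = fun x => (φ₃ * (φ₂ - φ₁) + φ₁ * (φ₃ - φ₂) * sn (x / (2 * g)) ^ 2)
      / ((φ₂ - φ₁) + (φ₃ - φ₂) * sn (x / (2 * g)) ^ 2) := funext hϕ
  have hder := hnum.div hden hD
  have hNA : d ^ 2 * (φ₃ * (φ₂ - φ₁))
      = (1 - s0 ^ 2) * (φ₃ * (φ₂ - φ₁) + φ₁ * (φ₃ - φ₂) * s0 ^ 2) := by
    have h := hsn' u
    rw [← hs0, ← hd] at h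
    linear_combination (φ₃ * (φ₂ - φ₁)) * h - (1 - s0 ^ 2) * s0 ^ 2 * hκ'
  have hV : deriv ϕ ξ = d * s0 * ((φ₁ - φ₃) * (φ₂ - φ₁) * (φ₃ - φ₂))
      / (g * ((φ₂ - φ₁) + (φ₃ - φ₂) * s0 ^ 2) ^ 2) := by
    rw [hϕf, (show HasDerivAt (fun x => (φ₃ * (φ₂ - φ₁) + φ₁ * (φ₃ - φ₂) * sn (x / (2 * g)) ^ 2)
      / ((φ₂ - φ₁) + (φ₃ - φ₂) * sn (x / (2 * g)) ^ 2)) _ ξ from hder).deriv]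
    simp only [Pi.add_apply, Pi.pow_apply, Nat.cast_ofNat, ← hu, ← hs0]
    field_simp
    ring
  rw [hV, hϕ ξ, ← hu, ← hs0]
  have hDg : g * ((φ₂ - φ₁) + (φ₃ - φ₂) * s0 ^ 2) ^ 2 ≠ 0 :=
    mul_ne_zero hgne (pow_ne_zero 2 hD)
  apply wave_ode_aux _ _ _ _ _ _ _ hD hDg
  linear_combination
    (((φ₂ - φ₁) + (φ₃ - φ₂) * s0 ^ 2) ^ 4 *
      (g ^ 2 * ((φ₃ - φ₁) ^ 2 * (φ₂ - φ₁) ^ 2 * (φ₃ - φ₂) ^ 2 * s0 ^ 2))) * hNA +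
    (((φ₂ - φ₁) + (φ₃ - φ₂) * s0 ^ 2) ^ 4 *
      (-(d ^ 2 * s0 ^ 2 * (φ₃ - φ₁) ^ 2 * (φ₂ - φ₁) ^ 2 * (φ₃ - φ₂) ^ 2))) * hg2
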